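/- (Simple-loop weight as a trace in the Gaussian case, single cycle) Let the factor graph be a single cycle with Gaussian pseudo-marginals at the BP fixed point: variables i_1,...,i_ℓ connected cyclically by pairwise factors a_1,...,a_ℓ, with joint Gaussian beliefs b_{a_s} on (X_{i_s}, X_{i_{s+1}}) (indices mod ℓ) whose one-variable marginals are the Gaussian b_{i_s}. Define c = ∏_{s=1}^{ℓ} Cov_{b_{a_s}}(X_{i_s}, X_{i_{s+1}}) / ∏_{s=1}^{ℓ} Var_{b_{i_s}}(X_{i_s}), and assume |c| < 1. Then ∫ (b_{i_1,E'}(v,v) − b_{i_1}(v)^2)/b_{i_1}(v) dv = c/(1−c), where b_{i_1,E'}(x, x') = ∫ [b_{a_1}(x, x_2) ⋯ b_{a_ℓ}(x_ℓ, x')/∏_{s=2}^{ℓ} b_{i_s}(x_s)] dx_2⋯dx_ℓ. -/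

import Mathlib

open MeasureTheory Real Finset

noncomputable section

/-- The density of `N(μ, s)` (with `s` the variance). -/
def gauss1 (μ s x : ℝ) : ℝ :=
  (Real.sqrt (2 * Real.pi * s))⁻¹ * Real.exp (-(x - μ)^2 / (2 * s))

/-- The density of a bivariate normal with means `μ1, μ2`, variances `s1, s2`
and covariance `c` (assumed nondegenerate: `s1*s2 - c^2 > 0`). -/
def gauss2 (μ1 μ2 s1 s2 c x y : ℝ) : ℝ :=
  (2 * Real.pi * Real.sqrt (s1 * s2 - c^2))⁻¹ *
    Real.exp (-(s2 * (x - μ1)^2 - 2 * c * (x - μ1) * (y - μ2) + s1 * (y - μ2)^2)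
      / (2 * (s1 * s2 - c^2)))

/-- The unrolled chain of variables along the cycle: position `0` is `x`,
positions `1, …, ℓ-1` are the integration variables `w`, and position `ℓ` is `x'`. -/
def cyc (ℓ : ℕ) (x x' : ℝ) (w : Fin (ℓ - 1) → ℝ) (tn : ℕ) : ℝ :=
  if tn = 0 then x else if h : tn - 1 < ℓ - 1 then w ⟨tn - 1, h⟩ else x'
lemma quad_sq (a b k x : ℝ) (ha : a ≠ 0) :
    Real.exp (-(a*x^2 + b*x + k)) =
      Real.exp (b^2/(4*a) - k) * Real.exp (-a * (x + b/(2*a))^2) := by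
  rw [← Real.exp_add]; congr 1; field_simp; ring

lemma integrable_quad {a : ℝ} (b k : ℝ) (ha : 0 < a) :
    Integrable (fun x => Real.exp (-(a*x^2 + b*x + k))) := by
  have : (fun x => Real.exp (-(a*x^2 + b*x + k))) =
      fun x => Real.exp (b^2/(4*a) - k) * Real.exp (-a * (x + b/(2*a))^2) := by
    funext x; exact quad_sq a b k x ha.ne'
  rw [this]
  exact (((integrable_exp_neg_mul_sq ha)).comp_add_right (b/(2*a))).const_mul _

lemma integral_quad {a : ℝ} (b k : ℝ) (ha : 0 < a) :
    ∫ x : ℝ, Real.exp (-(a*x^2 + b*x + k)) =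
      Real.sqrt (π / a) * Real.exp (b^2/(4*a) - k) := by
  simp_rw [fun x => quad_sq a b k x ha.ne']
  rw [integral_const_mul]
  rw [show ∫ x : ℝ, Real.exp (-a * (x + b/(2*a))^2)
      = ∫ x : ℝ, Real.exp (-a * x^2) from
    integral_add_right_eq_self (fun x => Real.exp (-a * x^2)) (b/(2*a))]
  rw [integral_gaussian]; ring

lemma gauss1_pos {μ s x : ℝ} (hs : 0 < s) : 0 < gauss1 μ s x := by
  have h2 : 0 < 2 * Real.pi * s := by positivity
  exact mul_pos (inv_pos.2 (Real.sqrt_pos.2 h2)) (Real.exp_pos _)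

lemma gauss1_quad (μ s x : ℝ) (hs : 0 < s) :
    gauss1 μ s x = (Real.sqrt (2 * Real.pi * s))⁻¹ *
      Real.exp (-((1/(2*s))*x^2 + (-(μ/s))*x + μ^2/(2*s))) := by
  unfold gauss1; congr 2; field_simp; ring

lemma integrable_gauss1 {μ s : ℝ} (hs : 0 < s) : Integrable (gauss1 μ s) := by
  have : gauss1 μ s = fun x => (Real.sqrt (2 * Real.pi * s))⁻¹ *
      Real.exp (-((1/(2*s))*x^2 + (-(μ/s))*x + μ^2/(2*s))) := by
    funext x; exact gauss1_quad μ s x hs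
  rw [this]
  exact (integrable_quad _ _ (by positivity)).const_mul _

lemma integral_gauss1 {μ s : ℝ} (hs : 0 < s) : ∫ x : ℝ, gauss1 μ s x = 1 := by
  simp_rw [fun x => gauss1_quad μ s x hs]
  rw [integral_const_mul, integral_quad _ _ (by positivity : (0:ℝ) < 1/(2*s))]
  have h1 : (-(μ/s))^2/(4*(1/(2*s))) - μ^2/(2*s) = 0 := by field_simp; ring
  rw [h1, Real.exp_zero, mul_one]
  have h2 : π / (1/(2*s)) = 2 * π * s := by field_simp
  rw [h2, inv_mul_cancel₀ (Real.sqrt_ne_zero'.2 (by positivity))]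

lemma gauss1_shift (m s x : ℝ) : gauss1 m s x = gauss1 0 s (x - m) := by
  unfold gauss1; rw [sub_zero]

lemma conv_key {t u : ℝ} (ht : 0 < t) (hu : 0 < u) (b p z : ℝ) : ∀ y : ℝ,
    gauss1 0 t y * gauss1 (p + b*y) u z =
      ((Real.sqrt (2*π*t))⁻¹ * (Real.sqrt (2*π*u))⁻¹) *
        Real.exp (-((1/(2*t) + b^2/(2*u))*y^2 + (-(b*(z-p)/u))*y + (z-p)^2/(2*u))) := by
  intro y; unfold gauss1
  rw [mul_mul_mul_comm, ← Real.exp_add]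
  congr 1
  field_simp
  ring

lemma integrable_conv {t u : ℝ} (ht : 0 < t) (hu : 0 < u) (b p z : ℝ) :
    Integrable (fun y => gauss1 0 t y * gauss1 (p + b*y) u z) := by
  simp_rw [conv_key ht hu b p z]
  exact (integrable_quad _ _ (by positivity)).const_mul _

lemma integral_conv {t u : ℝ} (ht : 0 < t) (hu : 0 < u) (b p z : ℝ) :
    ∫ y : ℝ, gauss1 0 t y * gauss1 (p + b*y) u z = gauss1 p (u + b^2*t) z := by
  have hub : 0 < u + b^2*t := by positivity
  have hA : (0:ℝ) < 1/(2*t) + b^2/(2*u) := by positivity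
  simp_rw [conv_key ht hu b p z]
  rw [integral_const_mul, integral_quad _ _ hA]
  unfold gauss1
  have hexp : (-(b*(z-p)/u))^2/(4*(1/(2*t) + b^2/(2*u))) - (z-p)^2/(2*u)
      = -(z - p)^2 / (2*(u + b^2*t)) := by
    have h1 : (1/(2*t) + b^2/(2*u)) ≠ 0 := hA.ne'
    field_simp
    ring
  have hconst : (Real.sqrt (2*π*t))⁻¹ * (Real.sqrt (2*π*u))⁻¹ *
      Real.sqrt (π/(1/(2*t) + b^2/(2*u))) = (Real.sqrt (2*π*(u + b^2*t)))⁻¹ := by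
    rw [← Real.sqrt_inv, ← Real.sqrt_inv, ← Real.sqrt_inv,
      ← Real.sqrt_mul (by positivity), ← Real.sqrt_mul (by positivity)]
    congr 1
    rw [eq_comm, inv_eq_iff_eq_inv, eq_comm]
    field_simp
  rw [hexp, ← hconst]
  ring

lemma kernel_shift {t1 t2 : ℝ} (m1 b1 m2 b2 x z : ℝ) : ∀ y : ℝ,
    gauss1 (m1 + b1*x) t1 y * gauss1 (m2 + b2*(y - m1)) t2 z =
      gauss1 0 t1 (y - (m1 + b1*x)) *
        gauss1 ((m2 + b2*(b1*x)) + b2*(y - (m1 + b1*x))) t2 z := by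
  intro y
  rw [gauss1_shift (m1 + b1*x) t1 y]
  congr 2
  ring

lemma integrable_kernel_comp {t1 t2 : ℝ} (ht1 : 0 < t1) (ht2 : 0 < t2)
    (m1 b1 m2 b2 x z : ℝ) :
    Integrable (fun y => gauss1 (m1 + b1*x) t1 y * gauss1 (m2 + b2*(y - m1)) t2 z) := by
  simp_rw [kernel_shift m1 b1 m2 b2 x z]
  exact (integrable_conv ht1 ht2 b2 (m2 + b2*(b1*x)) z).comp_sub_right (m1 + b1*x)

lemma integral_kernel_comp {t1 t2 : ℝ} (ht1 : 0 < t1) (ht2 : 0 < t2)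
    (m1 b1 m2 b2 x z : ℝ) :
    ∫ y : ℝ, gauss1 (m1 + b1*x) t1 y * gauss1 (m2 + b2*(y - m1)) t2 z =
      gauss1 (m2 + (b2*b1)*x) (t2 + b2^2*t1) z := by
  simp_rw [kernel_shift m1 b1 m2 b2 x z]
  rw [integral_sub_right_eq_self
    (fun y => gauss1 0 t1 y * gauss1 ((m2 + b2*(b1*x)) + b2*y) t2 z) (m1 + b1*x)]
  rw [integral_conv ht1 ht2 b2 (m2 + b2*(b1*x)) z]
  congr 1
  ring

lemma gauss2_factor {s1 s2 cv : ℝ} (hs1 : 0 < s1) (hpd : cv^2 < s1*s2)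
    (μ1 μ2 x y : ℝ) :
    gauss2 μ1 μ2 s1 s2 cv x y =
      gauss1 μ1 s1 x * gauss1 (μ2 + (cv/s1)*(x-μ1)) (s2 - cv^2/s1) y := by
  have hD : 0 < s1*s2 - cv^2 := by linarith
  have hτ : 0 < s2 - cv^2/s1 := by
    rw [sub_pos, div_lt_iff₀ hs1]; linarith [hpd]
  unfold gauss1 gauss2
  rw [mul_mul_mul_comm, ← Real.exp_add]
  have h1 : Real.sqrt (2*π*s1) * Real.sqrt (2*π*(s2-cv^2/s1))
      = 2*π*Real.sqrt (s1*s2-cv^2) := by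
    rw [← Real.sqrt_mul (by positivity)]
    rw [show 2*π*s1*(2*π*(s2-cv^2/s1)) = (2*π)^2*(s1*s2-cv^2) by field_simp]
    rw [Real.sqrt_mul (by positivity), Real.sqrt_sq (by positivity)]
  congr 1
  · rw [← h1, mul_inv]
  · rw [Real.exp_eq_exp]
    rw [show s2 - cv^2/s1 = (s1*s2-cv^2)/s1 by field_simp]
    rw [div_eq_iff (by positivity), add_mul, div_mul_eq_mul_div, div_mul_eq_mul_div,
      div_add_div _ _ (by positivity : (2*s1:ℝ) ≠ 0)
        (by positivity : (2*((s1*s2-cv^2)/s1):ℝ) ≠ 0),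
      eq_div_iff (by positivity)]
    field_simp
    ring

lemma peel (n : ℕ) (F : (Fin (n+1) → ℝ) → ℝ)
    (hF : Integrable (fun p : ℝ × (Fin n → ℝ) => F (Fin.cons p.1 p.2))
      ((volume : Measure ℝ).prod (volume : Measure (Fin n → ℝ)))) :
    Integrable F (volume : Measure (Fin (n+1) → ℝ)) ∧
    ∫ w, F w = ∫ u : ℝ, ∫ w' : Fin n → ℝ, F (Fin.cons u w') := by
  have mp := (MeasureTheory.volume_preserving_piFinSuccAbove (fun _ : Fin (n+1) => ℝ) 0).symm
  have hcons : ∀ p : ℝ × (Fin n → ℝ),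
      (MeasurableEquiv.piFinSuccAbove (fun _ : Fin (n+1) => ℝ) 0).symm p
        = Fin.cons p.1 p.2 := by
    intro p
    rw [MeasurableEquiv.piFinSuccAbove_symm_apply]
    simp [Fin.insertNthEquiv, Fin.insertNth_zero]
  have hcomp : (fun p : ℝ × (Fin n → ℝ) => F (Fin.cons p.1 p.2))
      = F ∘ (MeasurableEquiv.piFinSuccAbove (fun _ : Fin (n+1) => ℝ) 0).symm := by
    funext p; rw [Function.comp_apply, hcons]
  constructor
  · rw [hcomp, ← Measure.volume_eq_prod _ _] at hF
    exact (mp.integrable_comp_emb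
      (MeasurableEquiv.piFinSuccAbove (fun _ : Fin (n+1) => ℝ) 0).symm.measurableEmbedding).1 hF
  · rw [← mp.integral_comp
      (MeasurableEquiv.piFinSuccAbove (fun _ : Fin (n+1) => ℝ) 0).symm.measurableEmbedding F]
    simp_rw [hcons]
    rw [Measure.volume_eq_prod _ _, integral_prod _ hF]

noncomputable def Tv : (ℕ → ℝ) → (ℕ → ℝ) → ℕ → ℝ
  | _, t, 0 => t 0
  | b, t, (n+1) => Tv (fun i => b (i+1)) (fun i => t (i+1)) n
      + (∏ i ∈ Finset.range (n+1), b (i+1))^2 * t 0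

lemma Tv_pos : ∀ (n : ℕ) (b t : ℕ → ℝ), (∀ k, 0 < t k) → 0 < Tv b t n := by
  intro n
  induction n with
  | zero => intro b t ht; exact ht 0
  | succ n IH =>
    intro b t ht
    have h1 := IH (fun i => b (i+1)) (fun i => t (i+1)) (fun k => ht (k+1))
    have h2 := ht 0
    show 0 < Tv _ _ n + _^2 * t 0
    positivity

lemma Tv_eq : ∀ (n : ℕ) (b t S : ℕ → ℝ), (∀ k, t k = S (k+1) - (b k)^2 * S k) →
    Tv b t n = S (n+1) - (∏ i ∈ Finset.range (n+1), b i)^2 * S 0 := by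
  intro n
  induction n with
  | zero =>
    intro b t S h
    rw [show Tv b t 0 = t 0 from rfl, h 0, Finset.prod_range_one]
  | succ n IH =>
    intro b t S h
    rw [show Tv b t (n+1) = Tv (fun i => b (i+1)) (fun i => t (i+1)) n
        + (∏ i ∈ Finset.range (n+1), b (i+1))^2 * t 0 from rfl]
    rw [IH (fun i => b (i+1)) (fun i => t (i+1)) (fun k => S (k+1))
      (fun k => h (k+1)), h 0]
    rw [Finset.prod_range_succ' b (n+1)]
    ring

lemma cyc_zero (N : ℕ) (x z : ℝ) (w : Fin (N-1) → ℝ) : cyc N x z w 0 = x := by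
  simp [cyc]

lemma cyc_cons_succ (n : ℕ) (x z u : ℝ) (w' : Fin n → ℝ) (k : ℕ) :
    cyc (n+2) x z (Fin.cons u w') (k+1) = cyc (n+1) u z w' k := by
  unfold cyc
  rcases k with _ | j
  · simp
  · simp only [Nat.succ_ne_zero, if_false, Nat.add_sub_cancel]
    by_cases h : j + 1 < n + 1
    · rw [dif_pos (show j+1 < n+2-1 by omega), dif_pos (show j < n by omega)]
      exact Fin.cons_succ (α := fun _ => ℝ) u w' ⟨j, Nat.lt_of_succ_lt_succ h⟩
    · rw [dif_neg (show ¬(j+1 < n+2-1) by omega), dif_neg (show ¬(j < n) by omega)]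

lemma cyc_succ_lt (n : ℕ) (x z : ℝ) (w : Fin n → ℝ) (k : ℕ) (h : k < n) :
    cyc (n+1) x z w (k+1) = w ⟨k, h⟩ := by
  unfold cyc
  rw [if_neg (Nat.succ_ne_zero k), dif_pos (show k+1-1 < n+1-1 by omega)]
  exact congrArg w (Fin.ext (Nat.succ_sub_one k))

lemma continuous_cyc (N : ℕ) (z : ℝ) (k : ℕ) :
    Continuous (fun p : ℝ × (Fin (N-1) → ℝ) => cyc N p.1 z p.2 k) := by
  unfold cyc
  by_cases h0 : k = 0
  · simp only [h0, if_true, eq_self_iff_true]; exact continuous_fst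
  · simp only [h0, if_false]
    by_cases h1 : k - 1 < N - 1
    · simp only [dif_pos h1]; exact (continuous_apply _).comp continuous_snd
    · simp only [dif_neg h1]; exact continuous_const

lemma continuous_gauss1 {α : Type*} [TopologicalSpace α] {f g : α → ℝ} (s : ℝ)
    (hf : Continuous f) (hg : Continuous g) :
    Continuous fun a => gauss1 (f a) s (g a) := by
  unfold gauss1; fun_prop

lemma chain (n : ℕ) : ∀ (m b t : ℕ → ℝ), (∀ k, 0 < t k) → ∀ (x z : ℝ),
    Integrable (fun w : Fin n → ℝ => ∏ s : Fin (n+1),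
      gauss1 (m (s.1+1) + b s.1 * (cyc (n+1) x z w s.1 - m s.1)) (t s.1)
        (cyc (n+1) x z w (s.1+1)))
    ∧ ∫ w : Fin n → ℝ, (∏ s : Fin (n+1),
        gauss1 (m (s.1+1) + b s.1 * (cyc (n+1) x z w s.1 - m s.1)) (t s.1)
          (cyc (n+1) x z w (s.1+1)))
      = gauss1 (m (n+1) + (∏ i ∈ Finset.range (n+1), b i) * (x - m 0)) (Tv b t n) z := by
  induction n with
  | zero =>
    intro m b t ht x z
    have h1 : ∀ w : Fin 0 → ℝ, (∏ s : Fin 1,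
        gauss1 (m (s.1+1) + b s.1 * (cyc 1 x z w s.1 - m s.1)) (t s.1)
          (cyc 1 x z w (s.1+1)))
        = gauss1 (m 1 + b 0 * (x - m 0)) (t 0) z := by
      intro w
      rw [Fin.prod_univ_one]
      simp [cyc]
    have huniv : (volume : Measure (Fin 0 → ℝ)) Set.univ = 1 := by
      rw [volume_pi, Measure.pi_univ]; simp
    constructor
    · rw [funext h1]
      rw [integrable_const_iff]
      right; exact ⟨by rw [huniv]; exact ENNReal.one_lt_top⟩
    · rw [funext h1, integral_const, measureReal_def, huniv, Finset.prod_range_one,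
        show Tv b t 0 = t 0 from rfl]
      simp
  | succ n IH =>
    intro m b t ht x z
    set F : (Fin (n+1) → ℝ) → ℝ := fun w => ∏ s : Fin (n+2),
      gauss1 (m (s.1+1) + b s.1 * (cyc (n+2) x z w s.1 - m s.1)) (t s.1)
        (cyc (n+2) x z w (s.1+1)) with hFdef
    set G : ℝ → (Fin n → ℝ) → ℝ := fun u w' => ∏ s : Fin (n+1),
      gauss1 (m (s.1+1+1) + b (s.1+1) * (cyc (n+1) u z w' s.1 - m (s.1+1))) (t (s.1+1))
        (cyc (n+1) u z w' (s.1+1)) with hGdef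
    have IH' := fun u => IH (fun i => m (i+1)) (fun i => b (i+1)) (fun i => t (i+1))
      (fun k => ht (k+1)) u z
    have hsplit : ∀ (u : ℝ) (w' : Fin n → ℝ),
        F (Fin.cons u w') = gauss1 (m 1 + b 0 * (x - m 0)) (t 0) u * G u w' := by
      intro u w'
      simp only [hFdef]
      rw [Fin.prod_univ_succ]
      congr 1
      · apply Finset.prod_congr rfl
        intro s _
        show gauss1 (m (s.1+1+1) + b (s.1+1) * (cyc (n+2) x z (Fin.cons u w') (s.1+1) - m (s.1+1)))
          (t (s.1+1)) (cyc (n+2) x z (Fin.cons u w') (s.1+1+1)) = _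
        rw [cyc_cons_succ, cyc_cons_succ]
    have hTpos : 0 < Tv (fun i => b (i+1)) (fun i => t (i+1)) n :=
      Tv_pos n _ _ (fun k => ht (k+1))
    have hGcont : Continuous (fun p : ℝ × (Fin n → ℝ) =>
        gauss1 (m 1 + b 0 * (x - m 0)) (t 0) p.1 * G p.1 p.2) := by
      apply Continuous.mul
      · exact continuous_gauss1 _ continuous_const continuous_fst
      · apply continuous_finset_prod
        intro s _
        exact continuous_gauss1 _
          (continuous_const.add (continuous_const.mul
            ((continuous_cyc (n+1) z s.1).sub continuous_const)))
          (continuous_cyc (n+1) z (s.1+1))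
    have hmeas : AEStronglyMeasurable (fun p : ℝ × (Fin n → ℝ) => F (Fin.cons p.1 p.2))
        ((volume : Measure ℝ).prod (volume : Measure (Fin n → ℝ))) := by
      rw [show (fun p : ℝ × (Fin n → ℝ) => F (Fin.cons p.1 p.2))
        = fun p => gauss1 (m 1 + b 0 * (x - m 0)) (t 0) p.1 * G p.1 p.2 from
        funext fun p => hsplit p.1 p.2]
      exact hGcont.aestronglyMeasurable
    have hGpos : ∀ u w', 0 < G u w' := by
      intro u w'
      exact Finset.prod_pos (fun s _ => gauss1_pos (ht _))
    have hprod : Integrable (fun p : ℝ × (Fin n → ℝ) => F (Fin.cons p.1 p.2))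
        ((volume : Measure ℝ).prod (volume : Measure (Fin n → ℝ))) := by
      rw [MeasureTheory.integrable_prod_iff hmeas]
      constructor
      · refine Filter.Eventually.of_forall (fun u => ?_)
        simp_rw [hsplit u]
        exact ((IH' u).1).const_mul _
      · have heq : (fun u => ∫ w' : Fin n → ℝ, ‖F (Fin.cons u w')‖)
            = fun u => gauss1 (m 1 + b 0*(x - m 0)) (t 0) u *
              gauss1 (m (n+1+1) + (∏ i ∈ Finset.range (n+1), b (i+1)) * (u - m 1))
                (Tv (fun i => b (i+1)) (fun i => t (i+1)) n) z := by
          funext u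
          have h2 : ∀ w', ‖F (Fin.cons u w')‖
              = gauss1 (m 1 + b 0 * (x - m 0)) (t 0) u * G u w' := by
            intro w'
            rw [hsplit u w', norm_of_nonneg]
            exact le_of_lt (mul_pos (gauss1_pos (ht 0)) (hGpos u w'))
          simp_rw [h2]
          rw [integral_const_mul, (IH' u).2]
        rw [heq]
        exact integrable_kernel_comp (ht 0) hTpos (m 1) (b 0) (m (n+1+1))
          (∏ i ∈ Finset.range (n+1), b (i+1)) (x - m 0) z
    obtain ⟨hI, hEq⟩ := peel n F hprod
    refine ⟨hI, ?_⟩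
    rw [hEq]
    have hin : ∀ u : ℝ, (∫ w' : Fin n → ℝ, F (Fin.cons u w'))
        = gauss1 (m 1 + b 0*(x - m 0)) (t 0) u *
          gauss1 (m (n+1+1) + (∏ i ∈ Finset.range (n+1), b (i+1)) * (u - m 1))
            (Tv (fun i => b (i+1)) (fun i => t (i+1)) n) z := by
      intro u
      simp_rw [hsplit u]
      rw [integral_const_mul, (IH' u).2]
    simp_rw [hin]
    rw [integral_kernel_comp (ht 0) hTpos (m 1) (b 0) (m (n+1+1))
      (∏ i ∈ Finset.range (n+1), b (i+1)) (x - m 0) z]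
    congr 2
    rw [Finset.prod_range_succ' b (n+1), Finset.prod_range_succ' (fun i => b (i+1)) n]
    try ring
lemma integral_selfker {s c μ0 : ℝ} (hS : 0 < s) (hc : |c| < 1) :
    Integrable (fun v => gauss1 (μ0 + c*(v - μ0)) (s - c^2*s) v) ∧
    ∫ v : ℝ, gauss1 (μ0 + c*(v - μ0)) (s - c^2*s) v = 1/(1-c) := by
  obtain ⟨hcl, hcr⟩ := abs_lt.1 hc
  have hd : 0 < 1 - c := by linarith
  have hS2 : 0 < s - c^2*s := by nlinarith [mul_pos hS (show (0:ℝ) < 1 - c^2 by nlinarith)]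
  have hA : 0 < (1-c)^2/(2*(s - c^2*s)) := div_pos (pow_pos hd 2) (by positivity)
  have key : ∀ v : ℝ, gauss1 (μ0 + c*(v-μ0)) (s - c^2*s) v
      = (Real.sqrt (2*π*(s - c^2*s)))⁻¹ *
        Real.exp (-( ((1-c)^2/(2*(s - c^2*s)))*v^2 + (-((1-c)^2*μ0/(s - c^2*s)))*v
          + (1-c)^2*μ0^2/(2*(s - c^2*s)) )) := by
    intro v; unfold gauss1; congr 2; field_simp; ring
  constructor
  · simp_rw [key]
    exact (integrable_quad _ _ hA).const_mul _
  · simp_rw [key]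
    rw [integral_const_mul, integral_quad _ _ hA]
    have hzero : (-((1-c)^2*μ0/(s - c^2*s)))^2/(4*((1-c)^2/(2*(s - c^2*s))))
        - (1-c)^2*μ0^2/(2*(s - c^2*s)) = 0 := by
      field_simp
      ring
    rw [hzero, Real.exp_zero, mul_one]
    rw [show π/((1-c)^2/(2*(s - c^2*s))) = (2*π*(s - c^2*s))/(1-c)^2 by
      field_simp]
    rw [Real.sqrt_div (by positivity) _, Real.sqrt_sq hd.le]
    rw [div_eq_mul_inv, ← mul_assoc, inv_mul_cancel₀ (Real.sqrt_ne_zero'.2 (by positivity)),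
      one_mul, one_div]

/-- **simple-loop weight in the Gaussian case.** For a single cycle of
Gaussian pseudo-marginals `b_{a_s} = gauss2` on `(X_{i_s}, X_{i_{s+1}})` with consistent
univariate marginals `b_{i_s} = gauss1 (μ s) (sv s)` and covariances `cv s`, with
`c = ∏_s cv s / ∏_s sv s`, `|c| < 1`, the loop weight is
`∫ (b_{i_1,E'}(v,v) − b_{i_1}(v)²)/b_{i_1}(v) dv = c/(1−c)`, where
`b_{i_1,E'}(x,x') = ∫ ∏_s b_{a_s}/∏_{s=2}^ℓ b_{i_s} dx_2⋯dx_ℓ`. -/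
theorem gaussian_simple_loop_weight
    (ℓ : ℕ) (hℓ : 1 ≤ ℓ)
    (μ sv cv : Fin ℓ → ℝ)
    (hsv : ∀ s, 0 < sv s)
    (hpd : ∀ s : Fin ℓ, (cv s)^2 < sv s * sv ⟨(s.1 + 1) % ℓ, Nat.mod_lt _ (by omega)⟩)
    (c : ℝ) (hc : c = (∏ s, cv s) / ∏ s, sv s) (hc1 : |c| < 1) :
    (∫ v : ℝ,
      ((∫ w : Fin (ℓ - 1) → ℝ,
          (∏ s : Fin ℓ,
            gauss2 (μ s) (μ ⟨(s.1 + 1) % ℓ, Nat.mod_lt _ (by omega)⟩)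
              (sv s) (sv ⟨(s.1 + 1) % ℓ, Nat.mod_lt _ (by omega)⟩) (cv s)
              (cyc ℓ v v w s.1) (cyc ℓ v v w (s.1 + 1)))
          / ∏ tt : Fin (ℓ - 1),
              gauss1 (μ ⟨tt.1 + 1, by have := tt.2; omega⟩)
                (sv ⟨tt.1 + 1, by have := tt.2; omega⟩) (w tt))
        - (gauss1 (μ ⟨0, by omega⟩) (sv ⟨0, by omega⟩) v)^2)
      / gauss1 (μ ⟨0, by omega⟩) (sv ⟨0, by omega⟩) v)
    = c / (1 - c) := by
  obtain ⟨n, rfl⟩ : ∃ n, ℓ = n + 1 := ⟨ℓ - 1, by omega⟩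
  have hnp : 0 < n + 1 := Nat.succ_pos n
  set M : ℕ → ℝ := fun k => μ ⟨k % (n+1), Nat.mod_lt _ hnp⟩ with hMdef
  set Sv : ℕ → ℝ := fun k => sv ⟨k % (n+1), Nat.mod_lt _ hnp⟩ with hSvdef
  set Cv : ℕ → ℝ := fun k => cv ⟨k % (n+1), Nat.mod_lt _ hnp⟩ with hCvdef
  set b : ℕ → ℝ := fun k => Cv k / Sv k with hbdef
  set t : ℕ → ℝ := fun k => Sv (k+1) - (Cv k)^2 / Sv k with htdef
  have hfin : ∀ s : Fin (n+1),
      (⟨s.1 % (n+1), Nat.mod_lt _ hnp⟩ : Fin (n+1)) = s :=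
    fun s => Fin.ext (Nat.mod_eq_of_lt s.2)
  have hMs : ∀ s : Fin (n+1), M s.1 = μ s := fun s => congrArg μ (hfin s)
  have hbs : ∀ s : Fin (n+1), b s.1 = cv s / sv s := by
    intro s; simp only [hbdef, hCvdef, hSvdef]; rw [hfin s]
  have hts : ∀ s : Fin (n+1),
      t s.1 = sv ⟨(s.1+1) % (n+1), Nat.mod_lt _ hnp⟩ - (cv s)^2 / sv s := by
    intro s; simp only [htdef, hCvdef, hSvdef]; rw [hfin s]
  have ht : ∀ k, 0 < t k := by
    intro k
    have h := hpd ⟨k % (n+1), Nat.mod_lt _ hnp⟩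
    have hidx : (⟨((⟨k % (n+1), Nat.mod_lt _ hnp⟩ : Fin (n+1)).1 + 1) % (n+1),
        Nat.mod_lt _ (by omega)⟩ : Fin (n+1))
        = ⟨(k+1) % (n+1), Nat.mod_lt _ hnp⟩ := Fin.ext (by simp [Nat.mod_add_mod])
    rw [hidx] at h
    simp only [htdef, hCvdef, hSvdef]
    rw [sub_pos, div_lt_iff₀ (hsv _)]
    calc cv ⟨k % (n+1), Nat.mod_lt _ hnp⟩ ^ 2
        < sv ⟨k % (n+1), Nat.mod_lt _ hnp⟩ * sv ⟨(k+1) % (n+1), Nat.mod_lt _ hnp⟩ := h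
      _ = sv ⟨(k+1) % (n+1), Nat.mod_lt _ hnp⟩ * sv ⟨k % (n+1), Nat.mod_lt _ hnp⟩ := by
          ring
  have hb : ∏ i ∈ Finset.range (n+1), b i = c := by
    rw [hc, ← Fin.prod_univ_eq_prod_range b (n+1)]
    rw [show (∏ s : Fin (n+1), b s.1) = ∏ s : Fin (n+1), cv s / sv s from
      Finset.prod_congr rfl (fun s _ => hbs s)]
    rw [Finset.prod_div_distrib]
  have hSvpos : ∀ k, 0 < Sv k := fun k => hsv _
  have htS : ∀ k, t k = Sv (k+1) - (b k)^2 * Sv k := by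
    intro k
    simp only [htdef, hbdef]
    congr 1
    have hne := (hSvpos k).ne'
    field_simp
  have hT : Tv b t n = sv ⟨0, hnp⟩ - c^2 * sv ⟨0, hnp⟩ := by
    rw [Tv_eq n b t Sv htS, hb]
    have h1 : Sv (n+1) = sv ⟨0, hnp⟩ := by
      simp only [hSvdef]; exact congrArg sv (Fin.ext (by simp))
    have h2 : Sv 0 = sv ⟨0, hnp⟩ := by
      simp only [hSvdef]; exact congrArg sv (Fin.ext (by simp))
    rw [h1, h2]
  have hchain := chain n M b t ht
  have g0pos : ∀ v : ℝ, 0 < gauss1 (μ ⟨0, hnp⟩) (sv ⟨0, hnp⟩) v :=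
    fun v => gauss1_pos (hsv _)
  have hMn : M (n+1) = μ ⟨0, hnp⟩ := by
    simp only [hMdef]; exact congrArg μ (Fin.ext (by simp))
  have hM0 : M 0 = μ ⟨0, hnp⟩ := by
    simp only [hMdef]; exact congrArg μ (Fin.ext (by simp))
  have houter : ∀ v : ℝ,
      ((∫ w : Fin (n+1-1) → ℝ,
          (∏ s : Fin (n+1),
            gauss2 (μ s) (μ ⟨(s.1 + 1) % (n+1), Nat.mod_lt _ (by omega)⟩)
              (sv s) (sv ⟨(s.1 + 1) % (n+1), Nat.mod_lt _ (by omega)⟩) (cv s)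
              (cyc (n+1) v v w s.1) (cyc (n+1) v v w (s.1 + 1)))
          / ∏ tt : Fin (n+1-1),
              gauss1 (μ ⟨tt.1 + 1, by have := tt.2; omega⟩)
                (sv ⟨tt.1 + 1, by have := tt.2; omega⟩) (w tt))
        - (gauss1 (μ ⟨0, hnp⟩) (sv ⟨0, hnp⟩) v)^2)
      / gauss1 (μ ⟨0, hnp⟩) (sv ⟨0, hnp⟩) v
      = gauss1 (μ ⟨0, hnp⟩ + c * (v - μ ⟨0, hnp⟩))
          (sv ⟨0, hnp⟩ - c^2 * sv ⟨0, hnp⟩) v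
        - gauss1 (μ ⟨0, hnp⟩) (sv ⟨0, hnp⟩) v := by
    intro v
    have hpoint : ∀ w : Fin (n+1-1) → ℝ,
        (∏ s : Fin (n+1),
            gauss2 (μ s) (μ ⟨(s.1 + 1) % (n+1), Nat.mod_lt _ (by omega)⟩)
              (sv s) (sv ⟨(s.1 + 1) % (n+1), Nat.mod_lt _ (by omega)⟩) (cv s)
              (cyc (n+1) v v w s.1) (cyc (n+1) v v w (s.1 + 1)))
          / (∏ tt : Fin (n+1-1),
              gauss1 (μ ⟨tt.1 + 1, by have := tt.2; omega⟩)
                (sv ⟨tt.1 + 1, by have := tt.2; omega⟩) (w tt))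
        = gauss1 (μ ⟨0, hnp⟩) (sv ⟨0, hnp⟩) v *
          ∏ s : Fin (n+1),
            gauss1 (M (s.1+1) + b s.1 * (cyc (n+1) v v w s.1 - M s.1)) (t s.1)
              (cyc (n+1) v v w (s.1+1)) := by
      intro w
      have hsplit2 : ∀ s : Fin (n+1),
          gauss2 (μ s) (μ ⟨(s.1 + 1) % (n+1), Nat.mod_lt _ (by omega)⟩)
              (sv s) (sv ⟨(s.1 + 1) % (n+1), Nat.mod_lt _ (by omega)⟩) (cv s)
              (cyc (n+1) v v w s.1) (cyc (n+1) v v w (s.1 + 1))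
          = gauss1 (μ s) (sv s) (cyc (n+1) v v w s.1) *
            gauss1 (M (s.1+1) + b s.1 * (cyc (n+1) v v w s.1 - M s.1)) (t s.1)
              (cyc (n+1) v v w (s.1+1)) := by
        intro s
        rw [gauss2_factor (hsv s) (hpd s), hbs s, hMs s, hts s]
      rw [Finset.prod_congr rfl (fun s _ => hsplit2 s), Finset.prod_mul_distrib]
      have hprodA : (∏ s : Fin (n+1), gauss1 (μ s) (sv s) (cyc (n+1) v v w s.1))
          = gauss1 (μ ⟨0, hnp⟩) (sv ⟨0, hnp⟩) v *
            ∏ tt : Fin (n+1-1),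
              gauss1 (μ ⟨tt.1 + 1, by have := tt.2; omega⟩)
                (sv ⟨tt.1 + 1, by have := tt.2; omega⟩) (w tt) := by
        rw [Fin.prod_univ_succ]
        refine congrArg₂ (· * ·) ?_ ?_
        · rw [show ((0 : Fin (n+1)).1) = 0 from Fin.val_zero _, cyc_zero]
          rw [show (0 : Fin (n+1)) = ⟨0, hnp⟩ from Fin.ext (by simp)]
        · apply Finset.prod_congr rfl
          intro tt _
          simp only [Fin.val_succ]
          rw [cyc_succ_lt n v v w tt.1 tt.2]
          rfl
      rw [hprodA]
      have hDpos : (0:ℝ) < ∏ tt : Fin (n+1-1),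
          gauss1 (μ ⟨tt.1 + 1, by have := tt.2; omega⟩)
            (sv ⟨tt.1 + 1, by have := tt.2; omega⟩) (w tt) :=
        Finset.prod_pos (fun tt _ => gauss1_pos (hsv _))
      rw [show (gauss1 (μ ⟨0, hnp⟩) (sv ⟨0, hnp⟩) v *
          ∏ tt : Fin (n+1-1),
              gauss1 (μ ⟨tt.1 + 1, by have := tt.2; omega⟩)
                (sv ⟨tt.1 + 1, by have := tt.2; omega⟩) (w tt)) *
          (∏ s : Fin (n+1),
            gauss1 (M (s.1+1) + b s.1 * (cyc (n+1) v v w s.1 - M s.1)) (t s.1)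
              (cyc (n+1) v v w (s.1+1)))
          = (gauss1 (μ ⟨0, hnp⟩) (sv ⟨0, hnp⟩) v *
            (∏ s : Fin (n+1),
              gauss1 (M (s.1+1) + b s.1 * (cyc (n+1) v v w s.1 - M s.1)) (t s.1)
                (cyc (n+1) v v w (s.1+1)))) *
            (∏ tt : Fin (n+1-1),
              gauss1 (μ ⟨tt.1 + 1, by have := tt.2; omega⟩)
                (sv ⟨tt.1 + 1, by have := tt.2; omega⟩) (w tt)) by ring]
      rw [mul_div_assoc, div_self hDpos.ne', mul_one]
    have hchain2 : (∫ w : Fin (n+1-1) → ℝ, ∏ s : Fin (n+1),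
        gauss1 (M (s.1+1) + b s.1 * (cyc (n+1) v v w s.1 - M s.1)) (t s.1)
          (cyc (n+1) v v w (s.1+1)))
        = gauss1 (M (n+1) + (∏ i ∈ Finset.range (n+1), b i) * (v - M 0)) (Tv b t n) v :=
      (hchain v v).2
    simp_rw [hpoint]
    rw [MeasureTheory.integral_const_mul, hchain2, hb, hT, hMn, hM0]
    have hg := (g0pos v).ne'
    rw [sub_div, mul_comm (gauss1 (μ ⟨0, hnp⟩) (sv ⟨0, hnp⟩) v), mul_div_assoc,
      div_self hg, mul_one, pow_two (gauss1 (μ ⟨0, hnp⟩) (sv ⟨0, hnp⟩) v), mul_div_assoc,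
      div_self hg, mul_one]
  simp_rw [houter]
  rw [MeasureTheory.integral_sub (integral_selfker (hsv _) hc1).1
    (integrable_gauss1 (hsv _)), (integral_selfker (hsv _) hc1).2,
    integral_gauss1 (hsv _)]
  have hd : (1:ℝ) - c ≠ 0 := by
    obtain ⟨h1, h2⟩ := abs_lt.1 hc1; intro h; linarith
  field_simp
  ring
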